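/- Let x = p/q be an irreducible fraction with 0 < x < 1, x ≠ 1/2, and let F(x) = x/(1+x) = p/(p+q). If x < 1/2 then the reduced degree sequence of G_{F(x)} contains no entry equal to 5, i.e. P(5, F(x)) = 0; if x > 1/2 then it contains exactly 2p − q entries equal to 5, i.e. P(5, F(x)) = (2x − 1)/(x + 1). -/
import Mathlib


/-- Symbols for paths in the Farey binary tree. -/
inductive LR
  | L
  | R
deriving DecidableEq

/-- One step in the Farey binary tree: update the current pair of fractions
(represented as pairs (numerator, denominator) of naturals). -/
def fareyStep : ((ℕ × ℕ) × (ℕ × ℕ)) → LR → ((ℕ × ℕ) × (ℕ × ℕ))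
  | ((a, b), (c, d)), LR.L => ((a, b), (a + c, b + d))
  | ((a, b), (c, d)), LR.R => ((a + c, b + d), (c, d))

/-- The final pair of fractions of a word: after reading the first symbol `L`
the current pair is (0/1, 1/1); the remaining symbols update it. -/
def finalPair (w : List LR) : (ℕ × ℕ) × (ℕ × ℕ) :=
  w.tail.foldl fareyStep ((0, 1), (1, 1))

/-- The value ⟨w⟩ of a word: the mediant of its final pair, as (numerator, denominator). -/
def value (w : List LR) : ℕ × ℕ :=
  ((finalPair w).1.1 + (finalPair w).2.1, (finalPair w).1.2 + (finalPair w).2.2)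

/-- A word over {L,R} is a Farey word when its first symbol is `L`. -/
def IsFareyWord (w : List LR) : Prop := w.head? = some LR.L

/-- Concatenation of degree sequences:
[a₁,…,a_s] ⊕ [b₁,…,b_t] = [a₁+1, a₂, …, a_{s−1}, a_s+b₁, b₂, …, b_{t−1}, b_t+1]. -/
def oplus (A B : List ℕ) : List ℕ :=
  (A.dropLast.modifyHead (· + 1)) ++ [A.getLastD 0 + B.headD 0] ++ B.tail.dropLast
    ++ [B.getLastD 0 + 1]

/-- Update of the pair (D(left ancestor), D(right ancestor)) of unreduced degree
sequences along one symbol. -/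
def degStep : (List ℕ × List ℕ) → LR → (List ℕ × List ℕ)
  | (A, B), LR.L => (A, oplus A B)
  | (A, B), LR.R => (oplus A B, B)

/-- The pair (D(a/b), D(c/d)) of unreduced degree sequences of the final pair of a word;
0/1 and 1/1 are both assigned the list [1,1]. -/
def degPair (w : List LR) : List ℕ × List ℕ :=
  w.tail.foldl degStep ([1, 1], [1, 1])

/-- The unreduced degree sequence D(⟨w⟩) = D(a/b) ⊕ D(c/d) of the value of a word. -/
def Dseq (w : List LR) : List ℕ :=
  oplus (degPair w).1 (degPair w).2

/-- Reduction: [k₁,…,k_{q+1}] becomes [k₂,…,k_q, k₁+k_{q+1}]; the last entry is the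
boundary degree and the remaining ones are the inner degrees. -/
def reduce (D : List ℕ) : List ℕ :=
  D.tail.dropLast ++ [D.headD 0 + D.getLastD 0]

/-- The reduced degree sequence of the Haros graph G_{⟨w⟩}. -/
def degSeq (w : List LR) : List ℕ := reduce (Dseq w)

/-- Degree-distribution entropy S of the Haros graph G_{⟨w⟩}:
S = −Σ_k P(k)·ln P(k), summed over the degree values occurring in the reduced
degree sequence, where P(k) = m(k)/q. -/
noncomputable def Sent (w : List LR) : ℝ :=
  -∑ k ∈ (degSeq w).toFinset,
    (((degSeq w).count k : ℝ) / ((value w).2 : ℝ)) *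
      Real.log (((degSeq w).count k : ℝ) / ((value w).2 : ℝ))

/-- Reduced entropy H of the Haros graph G_{⟨w⟩} (with the convention 0·ln 0 = 0,
automatic since Real.log 0 = 0). -/
noncomputable def Hent (w : List LR) : ℝ :=
  let x : ℝ := ((value w).1 : ℝ) / ((value w).2 : ℝ)
  if x ≤ 1 / 2 then
    Sent w + 2 * x * Real.log x + (1 - 2 * x) * Real.log (1 - 2 * x)
  else
    Sent w + 2 * (1 - x) * Real.log (1 - x) + (2 * x - 1) * Real.log (2 * x - 1)

/-- Arithmetic conditions of the inductive invariant. -/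
def Cond (a b c d hA mA tA hB mB tB : ℕ) : Prop :=
  1 ≤ b ∧ 1 ≤ c ∧ 2 ≤ d ∧
  mA = 3 * a - b ∧
  (d = 2 → c = 1 ∧ b = 2 * a + 1 ∧ hB = 2 ∧ mB = 0 ∧ tB = 2) ∧
  (d ≠ 2 → mB = 3 * c - d ∧ ¬(3 * a > b ∧ 3 * c < d) ∧ ¬(3 * a < b ∧ 3 * c > d) ∧
    5 ≤ hB + tB ∧ 3 ≤ tB) ∧
  (tA + hB = 5 ↔ (d = 2 ∧ 0 < a)) ∧
  (hA + tA = 2 ∨ 5 ≤ hA + tA) ∧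
  (2 ≤ hA ∨ (a = 0 ∧ hA = 1 ∧ b = 1)) ∧
  1 ≤ hA ∧ 1 ≤ tA ∧ 2 ≤ hB ∧ 2 ≤ tB ∧ (tB = 2 → d = 2)

/-- The inductive invariant on (fraction pair, degree-sequence pair) states. -/
def StInv (fp : (ℕ × ℕ) × (ℕ × ℕ)) (dp : List ℕ × List ℕ) : Prop :=
  ∃ hA MA tA hB MB tB,
    dp.1 = (hA :: MA) ++ [tA] ∧ dp.2 = (hB :: MB) ++ [tB] ∧
    Cond fp.1.1 fp.1.2 fp.2.1 fp.2.2 hA (MA.count 5) tA hB (MB.count 5) tB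

lemma oplus_eq (hA tA hB tB : ℕ) (MA MB : List ℕ) :
    oplus ((hA :: MA) ++ [tA]) ((hB :: MB) ++ [tB])
      = ((hA + 1) :: (MA ++ ([tA + hB] ++ MB))) ++ [tB + 1] := by
  unfold oplus
  rw [List.dropLast_concat, List.getLastD_concat, List.getLastD_concat,
    List.cons_append, List.tail_cons, List.dropLast_concat]
  simp

lemma reduce_eq (h t : ℕ) (M : List ℕ) :
    reduce ((h :: M) ++ [t]) = M ++ [h + t] := by
  unfold reduce
  rw [List.getLastD_concat, List.cons_append, List.tail_cons, List.dropLast_concat]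
  simp

lemma count_mid (hB tA : ℕ) (MA MB : List ℕ) :
    (MA ++ ([tA + hB] ++ MB)).count 5
      = MA.count 5 + (if tA + hB = 5 then 1 else 0) + MB.count 5 := by
  by_cases h : tA + hB = 5 <;>
    simp [List.count_append, List.count_cons, h, eq_comm] <;> omega

lemma inv_step (fp : (ℕ × ℕ) × (ℕ × ℕ)) (dp : List ℕ × List ℕ) (s : LR)
    (h : StInv fp dp) : StInv (fareyStep fp s) (degStep dp s) := by
  obtain ⟨⟨a, b⟩, c, d⟩ := fp
  obtain ⟨A, B⟩ := dp
  obtain ⟨hA, MA, tA, hB, MB, tB, e1, e2, hc⟩ := h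
  simp only at e1 e2 hc
  subst e1 e2
  have hind : (tA + hB = 5 ∧ (if tA + hB = 5 then 1 else 0) = 1) ∨
      (tA + hB ≠ 5 ∧ (if tA + hB = 5 then 1 else 0) = 0) := by
    split <;> simp_all
  cases s with
  | L =>
    refine ⟨hA, MA, tA, hA + 1, MA ++ ([tA + hB] ++ MB), tB + 1, rfl, ?_, ?_⟩
    · simp only [degStep, oplus_eq]
    · simp only [fareyStep, count_mid]
      unfold Cond at hc ⊢
      omega
  | R =>
    refine ⟨hA + 1, MA ++ ([tA + hB] ++ MB), tB + 1, hB, MB, tB, ?_, rfl, ?_⟩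
    · simp only [degStep, oplus_eq]
    · simp only [fareyStep, count_mid]
      unfold Cond at hc ⊢
      omega

lemma inv_foldl (t : List LR) : ∀ fp dp, StInv fp dp →
    StInv (t.foldl fareyStep fp) (t.foldl degStep dp) := by
  induction t with
  | nil => intro fp dp h; exact h
  | cons s t ih =>
    intro fp dp h
    exact ih _ _ (inv_step fp dp s h)

lemma right_half (t : List LR) : ∀ st : (ℕ × ℕ) × (ℕ × ℕ),
    st.1.2 ≤ 2 * st.1.1 → st.2.2 < 2 * st.2.1 →
    (t.foldl fareyStep st).1.2 + (t.foldl fareyStep st).2.2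
      < 2 * ((t.foldl fareyStep st).1.1 + (t.foldl fareyStep st).2.1) := by
  induction t with
  | nil => intro st h1 h2; simp only [List.foldl_nil]; omega
  | cons s t ih =>
    intro st h1 h2
    obtain ⟨⟨a, b⟩, c, d⟩ := st
    cases s with
    | L => exact ih ((a, b), (a + c, b + d)) h1 (by simp only at h1 h2 ⊢; omega)
    | R => exact ih ((a + c, b + d), (c, d)) (by simp only at h1 h2 ⊢; omega) h2

/-- let x = p/q be irreducible with 0 < x < 1, x ≠ 1/2, and
F(x) = x/(1+x) = p/(p+q). If x < 1/2 then the reduced degree sequence of G_{F(x)} has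
no entry equal to 5, i.e. P(5, F(x)) = 0; if x > 1/2 then it has exactly 2p − q entries
equal to 5, i.e. P(5, F(x)) = (2x − 1)/(x + 1). -/

theorem statement12 (p q : ℕ) (hcop : Nat.Coprime p q) (hp : 0 < p) (hpq : p < q)
    (hne : 2 * p ≠ q) (w' : List LR) (hw' : IsFareyWord w')
    (hval' : value w' = (p, p + q)) :
    (2 * p < q → (degSeq w').count 5 = 0) ∧
    (q < 2 * p → (degSeq w').count 5 = 2 * p - q ∧
      ((degSeq w').count 5 : ℝ) / ((p : ℝ) + (q : ℝ))
        = (2 * ((p : ℝ) / (q : ℝ)) - 1) / ((p : ℝ) / (q : ℝ) + 1)) := by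
  -- w' = L :: t
  obtain ⟨s0, t, rfl⟩ : ∃ s0 t, w' = s0 :: t := by
    cases w' with
    | nil => simp [IsFareyWord] at hw'
    | cons s t => exact ⟨s, t, rfl⟩
  have hs0 : s0 = LR.L := by
    simpa [IsFareyWord] using hw'
  subst hs0
  -- the second symbol must be L
  cases t with
  | nil =>
    exfalso
    have hv : value [LR.L] = ((1 : ℕ), (2 : ℕ)) := rfl
    have h := hval'.symm.trans hv
    have h1 : p = 1 := congrArg Prod.fst h
    have h2 : p + q = 2 := congrArg Prod.snd h
    omega
  | cons s1 t' =>
    cases s1 with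
    | R =>
      exfalso
      have := right_half t' ((1, 2), (1, 1)) (by norm_num) (by norm_num)
      have hv : value (LR.L :: LR.R :: t')
          = ((finalPair (LR.L :: LR.R :: t')).1.1 + (finalPair (LR.L :: LR.R :: t')).2.1,
             (finalPair (LR.L :: LR.R :: t')).1.2 + (finalPair (LR.L :: LR.R :: t')).2.2) := rfl
      have hfp : finalPair (LR.L :: LR.R :: t') = t'.foldl fareyStep ((1, 2), (1, 1)) := rfl
      rw [hval'] at hv
      rw [hfp] at hv
      have h1 : p = (t'.foldl fareyStep ((1, 2), (1, 1))).1.1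
          + (t'.foldl fareyStep ((1, 2), (1, 1))).2.1 := congrArg Prod.fst hv
      have h2 : p + q = (t'.foldl fareyStep ((1, 2), (1, 1))).1.2
          + (t'.foldl fareyStep ((1, 2), (1, 1))).2.2 := congrArg Prod.snd hv
      omega
    | L =>
      -- base state after LL
      have hbase : StInv ((0, 1), (1, 2)) ([1, 1], [2, 2, 2]) := by
        refine ⟨1, [], 1, 2, [2], 2, rfl, rfl, ?_⟩
        unfold Cond
        norm_num
      have hinv := inv_foldl t' _ _ hbase
      have hfp : finalPair (LR.L :: LR.L :: t') = t'.foldl fareyStep ((0, 1), (1, 2)) := rfl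
      have hdp : degPair (LR.L :: LR.L :: t') = t'.foldl degStep ([1, 1], [2, 2, 2]) := rfl
      obtain ⟨hA, MA, tA, hB, MB, tB, e1, e2, hc⟩ := hinv
      set F := t'.foldl fareyStep ((0, 1), (1, 2)) with hF
      obtain ⟨⟨a, b⟩, c, d⟩ := F
      simp only at hc
      have hv : value (LR.L :: LR.L :: t') = (a + c, b + d) := by
        simp only [value, hfp]
      rw [hval'] at hv
      have hac : a + c = p := (Prod.mk.injEq _ _ _ _ ▸ hv).1.symm
      have hbd : b + d = p + q := (Prod.mk.injEq _ _ _ _ ▸ hv).2.symm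
      -- compute degSeq
      have hD : Dseq (LR.L :: LR.L :: t')
          = ((hA + 1) :: (MA ++ ([tA + hB] ++ MB))) ++ [tB + 1] := by
        simp only [Dseq, hdp, ← hF]
        rw [show (t'.foldl degStep ([1, 1], [2, 2, 2])).1 = (hA :: MA) ++ [tA] from e1,
            show (t'.foldl degStep ([1, 1], [2, 2, 2])).2 = (hB :: MB) ++ [tB] from e2]
        exact oplus_eq hA tA hB tB MA MB
      have hred : degSeq (LR.L :: LR.L :: t')
          = (MA ++ ([tA + hB] ++ MB)) ++ [hA + 1 + (tB + 1)] := by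
        simp only [degSeq, hD]
        exact reduce_eq _ _ _
      have hcount : (degSeq (LR.L :: LR.L :: t')).count 5
          = MA.count 5 + (if tA + hB = 5 then 1 else 0) + MB.count 5
            + (if hA + 1 + (tB + 1) = 5 then 1 else 0) := by
        rw [hred, List.count_append, count_mid]
        by_cases h2 : hA + 1 + (tB + 1) = 5 <;>
          simp [List.count_cons, h2, eq_comm] <;> omega
      have hind : (tA + hB = 5 ∧ (if tA + hB = 5 then 1 else 0) = 1) ∨
          (tA + hB ≠ 5 ∧ (if tA + hB = 5 then 1 else 0) = 0) := by
        split <;> simp_all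
      have hind2 : (hA + 1 + (tB + 1) = 5 ∧ (if hA + 1 + (tB + 1) = 5 then 1 else 0) = 1) ∨
          (hA + 1 + (tB + 1) ≠ 5 ∧ (if hA + 1 + (tB + 1) = 5 then 1 else 0) = 0) := by
        split <;> simp_all
      have hmain : (degSeq (LR.L :: LR.L :: t')).count 5 = 2 * p - q := by
        rw [hcount]
        unfold Cond at hc
        omega
      refine ⟨fun h => by omega, fun h => ⟨by omega, ?_⟩⟩
      rw [hmain]
      have hq0 : (0 : ℝ) < (q : ℝ) := by
        have : 0 < q := by omega
        exact_mod_cast this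
      have hc1 : ((2 * p - q : ℕ) : ℝ) = 2 * (p : ℝ) - (q : ℝ) := by
        have hle : q ≤ 2 * p := by omega
        push_cast [Nat.cast_sub hle]
        ring
      rw [hc1]
      have hx : (p : ℝ) / (q : ℝ) + 1 ≠ 0 := by positivity
      have hpq0 : (p : ℝ) + (q : ℝ) ≠ 0 := by positivity
      field_simp
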